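/- arXiv:2305.01635 — 4 statements merged into one kernel-verified Lean document; each statement's English description precedes it below -/
import Mathlib

section
/- Let G be a linearly ordered abelian group, A a convex subgroup, H = G/A with quotient map ρ : G → H, and α : H → G a transversal map with α(0) = 0; let β(h,h') = α(h+h') − α(h) − α(h') (which takes values in A). Then the map f : A × H → G defined by f(z,h) = z + α(h) is a bijection satisfying f((z,h) ⊕ (z',h')) = f(z,h) + f(z',h') for the twisted addition (z,h) ⊕ (z',h') = (z + z' − β(h,h'), h + h'), and f is order-preserving from the order '(z,h) ≤ (z',h') iff h < h' or (h = h' and z ≤ z')' to the order of G. Hence G_β is isomorphic to G as ordered abelian groups. -/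
/-- For `G` a linearly ordered abelian group, `A` a convex subgroup,
`H = G/A` with quotient map `ρ`, and `α : H → G` a transversal map with `α 0 = 0`,
the cocycle `β` takes values in `A` and the map `f (z, h) = z + α h` is a bijection
from `A × H` to `G`, additive for the twisted addition
`(z,h) ⊕ (z',h') = (z + z' - β h h', h + h')`, and order-preserving from the order
`(z,h) ≤ (z',h') ↔ h < h' ∨ (h = h' ∧ z ≤ z')` to the order of `G`.
Hence `G_β ≅ G` as ordered abelian groups. -/
theorem twisted_sum_group_iso
    {G H : Type*} [AddCommGroup G] [LinearOrder G] [IsOrderedAddMonoid G]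
    [AddCommGroup H] [LinearOrder H] [IsOrderedAddMonoid H]
    (A : AddSubgroup G)
    (hconv : ∀ a b g : G, a ∈ A → b ∈ A → a ≤ g → g ≤ b → g ∈ A)
    (ρ : G →+ H) (hρsurj : Function.Surjective ρ) (hρmono : Monotone ρ)
    (hker : ∀ g : G, ρ g = 0 ↔ g ∈ A)
    (α : H → G) (hα : ∀ h : H, ρ (α h) = h) (hα0 : α 0 = 0)
    (β : H → H → A)
    (hβ : ∀ h h' : H, (β h h' : G) = α (h + h') - α h - α h')
    (add : A × H → A × H → A × H)
    (hadd : ∀ p q : A × H, add p q = (p.1 + q.1 - β p.2 q.2, p.2 + q.2))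
    (le : A × H → A × H → Prop)
    (hle : ∀ p q : A × H, le p q ↔ (p.2 < q.2 ∨ (p.2 = q.2 ∧ p.1 ≤ q.1)))
    (f : A × H → G)
    (hf : ∀ p : A × H, f p = (p.1 : G) + α p.2) :
    Function.Bijective f ∧
    (∀ p q : A × H, f (add p q) = f p + f q) ∧
    (∀ p q : A × H, le p q → f p ≤ f q) := by
  refine ⟨⟨?_, ?_⟩, ?_, ?_⟩
  · intro p q hpq
    rw [hf, hf] at hpq
    have h2 : p.2 = q.2 := by
      have := congrArg ρ hpq
      simpa [map_add, (hker _).mpr p.1.2, (hker _).mpr q.1.2, hα] using this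
    have h1 : (p.1 : G) = q.1 := by
      rw [h2] at hpq; exact add_right_cancel hpq
    exact Prod.ext (Subtype.ext h1) h2
  · intro g
    refine ⟨(⟨g - α (ρ g), (hker _).mp (by simp [hα])⟩, ρ g), ?_⟩
    simp [hf]
  · intro p q
    simp only [hf, hadd, AddSubgroup.coe_sub, AddSubgroup.coe_add, hβ]
    abel
  · intro p q hpq
    rw [hle] at hpq
    rcases hpq with h | ⟨h2, h1⟩
    · by_contra hlt
      push_neg at hlt
      have h3 : ρ (f q) ≤ ρ (f p) := hρmono hlt.le
      rw [hf, hf] at h3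
      simp only [map_add, (hker _).mpr p.1.2, (hker _).mpr q.1.2, hα, zero_add] at h3
      exact absurd (lt_of_lt_of_le h h3) (lt_irrefl _)
    · rw [hf, hf, h2]
      exact add_le_add_left (by exact_mod_cast h1) _
end

section
/- Let H and A be linearly ordered abelian groups, K a field, β : H × H → A a normalized symmetric 2-cocycle, and σ : A → Kˣ a homomorphism from the additive group A to the multiplicative group of units of K. Then the twisted multiplication ⋆ on HahnSeries H K, given by (a ⋆ b).coeff(l) = Σ_{h+h'=l} (a.coeff h)·(b.coeff h')·σ(−β(h,h')), is associative and commutative, distributes over the coefficientwise addition, has the series with single coefficient 1 at exponent 0 as multiplicative identity, and every nonzero element has a multiplicative inverse; hence HahnSeries H K with coefficientwise addition and ⋆ is a field, denoted K(t^H,β). -/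
/-- The twisted multiplication on Hahn series determined by a 2-cocycle
`β : H × H → A` and a multiplicative section `σ : A → Kˣ`:
`(a ⋆ b).coeff l = ∑_{h + h' = l} a.coeff h * b.coeff h' * σ (-β h h')`. -/
noncomputable def tmul {K H A : Type*} [Field K]
    [AddCommGroup H] [LinearOrder H] [IsOrderedAddMonoid H] [AddCommGroup A]
    (σ : A → Kˣ) (β : H → H → A) (x y : HahnSeries H K) : HahnSeries H K where
  coeff l := ∑ ij ∈ Finset.antidiagonal x.isPWO_support y.isPWO_support l,
      x.coeff ij.1 * y.coeff ij.2 * (σ (-β ij.1 ij.2) : K)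
  isPWO_support' := by
    refine Set.IsPWO.mono (x.isPWO_support.add y.isPWO_support) ?_
    intro l hl
    obtain ⟨ij, hij, -⟩ :=
      Finset.exists_ne_zero_of_sum_ne_zero (Function.mem_support.mp hl)
    rw [Finset.mem_antidiagonal] at hij
    exact Set.mem_add.mpr ⟨ij.1, hij.1, ij.2, hij.2.1, hij.2.2⟩

section Twisted

open Finset HahnSeries Pointwise

variable {K H A : Type*} [Field K]
    [AddCommGroup H] [LinearOrder H] [IsOrderedAddMonoid H] [AddCommGroup A]
    (σ : A → Kˣ) (β : H → H → A)

theorem tmul_coeff {x y : HahnSeries H K} {l : H} :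
    (tmul σ β x y).coeff l = ∑ ij ∈ Finset.addAntidiagonal x.isPWO_support y.isPWO_support l,
      x.coeff ij.1 * y.coeff ij.2 * (σ (-β ij.1 ij.2) : K) := rfl

theorem tmul_coeff_left' {x y : HahnSeries H K} {l : H} {s : Set H} (hs : s.IsPWO)
    (hxs : x.support ⊆ s) :
    (tmul σ β x y).coeff l = ∑ ij ∈ Finset.addAntidiagonal hs y.isPWO_support l,
      x.coeff ij.1 * y.coeff ij.2 * (σ (-β ij.1 ij.2) : K) := by
  rw [tmul_coeff]
  refine Finset.sum_subset (Finset.addAntidiagonal_mono_left hxs) ?_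
  intro b hb hb2
  have h1 := Finset.mem_addAntidiagonal.mp hb
  have hx : x.coeff b.1 = 0 := by
    by_contra hx
    exact hb2 (Finset.mem_addAntidiagonal.mpr ⟨hx, h1.2.1, h1.2.2⟩)
  rw [hx, zero_mul, zero_mul]

theorem tmul_coeff_right' {x y : HahnSeries H K} {l : H} {s : Set H} (hs : s.IsPWO)
    (hys : y.support ⊆ s) :
    (tmul σ β x y).coeff l = ∑ ij ∈ Finset.addAntidiagonal x.isPWO_support hs l,
      x.coeff ij.1 * y.coeff ij.2 * (σ (-β ij.1 ij.2) : K) := by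
  rw [tmul_coeff]
  refine Finset.sum_subset (Finset.addAntidiagonal_mono_right hys) ?_
  intro b hb hb2
  have h1 := Finset.mem_addAntidiagonal.mp hb
  have hy : y.coeff b.2 = 0 := by
    by_contra hy
    exact hb2 (Finset.mem_addAntidiagonal.mpr ⟨h1.1, hy, h1.2.2⟩)
  rw [hy, mul_zero, zero_mul]

theorem support_tmul_subset {x y : HahnSeries H K} :
    (tmul σ β x y).support ⊆ x.support + y.support := by
  intro l hl
  obtain ⟨ij, hij, -⟩ :=
    Finset.exists_ne_zero_of_sum_ne_zero (Function.mem_support.mp hl)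
  rw [Finset.mem_addAntidiagonal] at hij
  exact Set.mem_add.mpr ⟨ij.1, hij.1, ij.2, hij.2.1, hij.2.2⟩

@[simp] theorem tmul_zero (x : HahnSeries H K) : tmul σ β x 0 = 0 := by
  ext l; simp [tmul_coeff]

@[simp] theorem zero_tmul (x : HahnSeries H K) : tmul σ β (0 : HahnSeries H K) x = 0 := by
  ext l; simp [tmul_coeff]

theorem tmul_add (x y z : HahnSeries H K) :
    tmul σ β x (y + z) = tmul σ β x y + tmul σ β x z := by
  ext l
  have hwf := y.isPWO_support.union z.isPWO_support
  rw [HahnSeries.coeff_add, tmul_coeff_right' σ β hwf (support_add_subset y z),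
    tmul_coeff_right' σ β hwf Set.subset_union_left,
    tmul_coeff_right' σ β hwf Set.subset_union_right, ← Finset.sum_add_distrib]
  refine Finset.sum_congr rfl fun ij _ => ?_
  rw [HahnSeries.coeff_add]
  ring

theorem tmul_sub (x y z : HahnSeries H K) :
    tmul σ β x (y - z) = tmul σ β x y - tmul σ β x z := by
  rw [eq_sub_iff_add_eq, ← tmul_add, sub_add_cancel]

theorem tmul_comm (hβsymm : ∀ h h' : H, β h h' = β h' h) (x y : HahnSeries H K) :
    tmul σ β x y = tmul σ β y x := by
  ext l
  rw [tmul_coeff, tmul_coeff]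
  refine Finset.sum_equiv (Equiv.prodComm H H) (fun _ => swap_mem_addAntidiagonal.symm) ?_
  intro ij _
  simp only [Equiv.prodComm_apply, Prod.fst_swap, Prod.snd_swap]
  rw [hβsymm ij.1 ij.2]
  ring

theorem single_tmul_coeff_add {d : K} {x : HahnSeries H K} {a b : H} :
    (tmul σ β (HahnSeries.single b d) x).coeff (b + a) =
      d * x.coeff a * (σ (-β b a) : K) := by
  by_cases hd : d = 0
  · simp [hd, tmul_coeff]
  rw [tmul_coeff]
  have hsub : Finset.addAntidiagonal (HahnSeries.single b d).isPWO_support x.isPWO_support (b + a)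
      ⊆ {(b, a)} := by
    intro ij hij
    obtain ⟨h1, h2, h3⟩ := Finset.mem_addAntidiagonal.mp hij
    rw [support_single_of_ne hd] at h1
    have : ij.1 = b := h1
    have : ij.2 = a := by
      have := h3
      rw [‹ij.1 = b›] at this
      exact add_left_cancel this
    simp only [Finset.mem_singleton]
    exact Prod.ext ‹ij.1 = b› ‹ij.2 = a›
  rw [Finset.sum_subset hsub ?_, Finset.sum_singleton, coeff_single_same]
  intro ij hij hij2
  obtain rfl : ij = (b, a) := Finset.mem_singleton.mp hij
  have hx : x.coeff a = 0 := by
    by_contra hx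
    exact hij2 (Finset.mem_addAntidiagonal.mpr
      ⟨by rw [support_single_of_ne hd]; rfl, hx, rfl⟩)
  simp [hx]

end Twisted

section Twisted2

open Finset HahnSeries Pointwise

variable {K H A : Type*} [Field K]
    [AddCommGroup H] [LinearOrder H] [IsOrderedAddMonoid H] [AddCommGroup A]
    (σ : A → Kˣ) (β : H → H → A)

theorem sigma_zero (hσ : ∀ a a' : A, σ (a + a') = σ a * σ a') : σ 0 = 1 := by
  have h1 : σ 0 * σ 0 = σ 0 * 1 := by rw [mul_one, ← hσ 0 0, add_zero]
  exact mul_left_cancel h1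

theorem single_zero_one_tmul (hσ : ∀ a a' : A, σ (a + a') = σ a * σ a')
    (hβnorm : ∀ h : H, β h 0 = 0 ∧ β 0 h = 0) (x : HahnSeries H K) :
    tmul σ β (HahnSeries.single (0 : H) (1 : K)) x = x := by
  ext l
  have h := single_tmul_coeff_add σ β (d := (1 : K)) (x := x) (a := l) (b := 0)
  rw [zero_add] at h
  rw [h, (hβnorm l).2, neg_zero, sigma_zero σ hσ, Units.val_one, one_mul, mul_one]

theorem tmul_assoc (hσ : ∀ a a' : A, σ (a + a') = σ a * σ a')
    (hβcoc : ∀ h h' h'' : H, β h h' + β (h + h') h'' = β h' h'' + β h (h' + h''))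
    (x y z : HahnSeries H K) :
    tmul σ β (tmul σ β x y) z = tmul σ β x (tmul σ β y z) := by
  have key : ∀ k l j : H, (σ (-β k l) : K) * (σ (-β (k + l) j) : K) =
      (σ (-β l j) : K) * (σ (-β k (l + j)) : K) := by
    intro k l j
    rw [← Units.val_mul, ← Units.val_mul, ← hσ, ← hσ, ← neg_add, ← neg_add, hβcoc]
  ext b
  rw [tmul_coeff_left' σ β (x.isPWO_support.add y.isPWO_support) (support_tmul_subset σ β),
    tmul_coeff_right' σ β (y.isPWO_support.add z.isPWO_support) (support_tmul_subset σ β)]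
  simp only [tmul_coeff, Finset.sum_mul, Finset.mul_sum, Finset.sum_sigma']
  apply Finset.sum_nbij' (fun ⟨⟨_i, j⟩, ⟨k, l⟩⟩ ↦ ⟨(k, l + j), (l, j)⟩)
    (fun ⟨⟨i, _j⟩, ⟨k, l⟩⟩ ↦ ⟨(i + k, l), (i, k)⟩)
  · rintro ⟨⟨i, j⟩, ⟨k, l⟩⟩ hmem
    simp only [Finset.mem_sigma] at hmem ⊢
    obtain ⟨⟨hi, hj, hij⟩, hk, hl, hkl⟩ := And.imp Finset.mem_addAntidiagonal.mp Finset.mem_addAntidiagonal.mp hmem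
    refine ⟨Finset.mem_addAntidiagonal.mpr ⟨hk, Set.add_mem_add hl hj, ?_⟩, Finset.mem_addAntidiagonal.mpr ⟨hl, hj, rfl⟩⟩
    rw [← add_assoc, hkl, hij]
  · rintro ⟨⟨i, j⟩, ⟨k, l⟩⟩ hmem
    simp only [Finset.mem_sigma] at hmem ⊢
    obtain ⟨⟨hi, hj, hij⟩, hk, hl, hkl⟩ := And.imp Finset.mem_addAntidiagonal.mp Finset.mem_addAntidiagonal.mp hmem
    refine ⟨Finset.mem_addAntidiagonal.mpr ⟨Set.add_mem_add hi hk, hl, ?_⟩, Finset.mem_addAntidiagonal.mpr ⟨hi, hk, rfl⟩⟩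
    rw [add_assoc, hkl, hij]
  · rintro ⟨⟨i, j⟩, ⟨k, l⟩⟩ hmem
    simp only [Finset.mem_sigma] at hmem
    obtain ⟨⟨hi, hj, hij⟩, hk, hl, hkl⟩ := And.imp Finset.mem_addAntidiagonal.mp Finset.mem_addAntidiagonal.mp hmem
    simp [hkl]
  · rintro ⟨⟨i, j⟩, ⟨k, l⟩⟩ hmem
    simp only [Finset.mem_sigma] at hmem
    obtain ⟨⟨hi, hj, hij⟩, hk, hl, hkl⟩ := And.imp Finset.mem_addAntidiagonal.mp Finset.mem_addAntidiagonal.mp hmem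
    simp [← hkl]
  · rintro ⟨⟨i, j⟩, ⟨k, l⟩⟩ hmem
    simp only [Finset.mem_sigma] at hmem
    obtain ⟨⟨hi, hj, hij⟩, hk, hl, hkl⟩ := And.imp Finset.mem_addAntidiagonal.mp Finset.mem_addAntidiagonal.mp hmem
    subst hkl
    linear_combination (x.coeff k * y.coeff l * z.coeff j) * key k l j

end Twisted2

section Twisted3

open Finset HahnSeries HahnSeries.SummableFamily Pointwise

variable {K H A : Type*} {α : Type*} [Field K]
    [AddCommGroup H] [LinearOrder H] [IsOrderedAddMonoid H] [AddCommGroup A]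
    (σ : A → Kˣ) (β : H → H → A)

/-- Twisted multiplication of a Hahn series with a summable family. -/
noncomputable def tmulFamily (x : HahnSeries H K)
    (s : SummableFamily H K α) : SummableFamily H K α where
  toFun a := tmul σ β x (s a)
  isPWO_iUnion_support' := by
    refine (x.isPWO_support.add s.isPWO_iUnion_support).mono ?_
    refine Set.iUnion_subset fun a => ?_
    intro g hg
    obtain ⟨i, hi, j, hj, rfl⟩ := support_tmul_subset σ β hg
    exact Set.mem_add.mpr ⟨i, hi, j, Set.mem_iUnion.2 ⟨a, hj⟩, rfl⟩
  finite_co_support' g := by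
    refine Set.Finite.subset (Set.Finite.biUnion
      (Finset.addAntidiagonal x.isPWO_support s.isPWO_iUnion_support g).finite_toSet
      (fun ij _ => s.finite_co_support ij.2)) ?_
    intro a ha
    obtain ⟨ij, hij, hne⟩ :=
      Finset.exists_ne_zero_of_sum_ne_zero (Set.mem_setOf_eq ▸ ha)
    obtain ⟨h1, h2, h3⟩ := Finset.mem_addAntidiagonal.mp hij
    have hs' : (s a).coeff ij.2 ≠ 0 := h2
    exact Set.mem_biUnion (Finset.mem_coe.mpr (Finset.mem_addAntidiagonal.mpr
      ⟨h1, Set.mem_iUnion.2 ⟨a, h2⟩, h3⟩)) hs'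

@[simp] theorem tmulFamily_apply (x : HahnSeries H K) (s : SummableFamily H K α) (a : α) :
    tmulFamily σ β x s a = tmul σ β x (s a) := rfl

theorem tmul_hsum (x : HahnSeries H K) (s : SummableFamily H K α) :
    tmul σ β x s.hsum = (tmulFamily σ β x s).hsum := by
  classical
  ext g
  set T := Finset.addAntidiagonal x.isPWO_support s.isPWO_iUnion_support g with hT
  set A' : Finset α := T.biUnion (fun ij => (s.finite_co_support ij.2).toFinset) with hA
  have hmem : {a | ((tmulFamily σ β x s) a).coeff g ≠ 0} ⊆ A' := by
    intro a ha
    obtain ⟨ij, hij, hne⟩ :=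
      Finset.exists_ne_zero_of_sum_ne_zero (Set.mem_setOf_eq ▸ ha)
    obtain ⟨h1, h2, h3⟩ := Finset.mem_addAntidiagonal.mp hij
    refine Finset.mem_biUnion.mpr ⟨ij, ?_, (s.finite_co_support ij.2).mem_toFinset.mpr h2⟩
    exact Finset.mem_addAntidiagonal.mpr ⟨h1, Set.mem_iUnion.2 ⟨a, h2⟩, h3⟩
  rw [coeff_hsum_eq_sum_of_subset hmem,
    tmul_coeff_right' σ β s.isPWO_iUnion_support support_hsum_subset]
  have h1 : ∀ ij ∈ T, s.hsum.coeff ij.2 = ∑ a ∈ A', (s a).coeff ij.2 := by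
    intro ij hij
    refine coeff_hsum_eq_sum_of_subset fun a ha =>
      Finset.mem_biUnion.mpr ⟨ij, hij, (s.finite_co_support ij.2).mem_toFinset.mpr ha⟩
  calc ∑ ij ∈ T, x.coeff ij.1 * s.hsum.coeff ij.2 * (σ (-β ij.1 ij.2) : K)
      = ∑ ij ∈ T, ∑ a ∈ A', x.coeff ij.1 * (s a).coeff ij.2 * (σ (-β ij.1 ij.2) : K) := by
        refine Finset.sum_congr rfl fun ij hij => ?_
        rw [h1 ij hij, Finset.mul_sum, Finset.sum_mul]
    _ = ∑ a ∈ A', ∑ ij ∈ T, x.coeff ij.1 * (s a).coeff ij.2 * (σ (-β ij.1 ij.2) : K) :=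
        Finset.sum_comm
    _ = ∑ a ∈ A', ((tmulFamily σ β x s) a).coeff g := by
        refine Finset.sum_congr rfl fun a _ => ?_
        rw [tmulFamily_apply, tmul_coeff_right' σ β s.isPWO_iUnion_support
          (Set.subset_iUnion (fun b => (s b).support) a)]

/-- Twisted powers. -/
noncomputable def tpow (y : HahnSeries H K) : ℕ → HahnSeries H K
  | 0 => HahnSeries.single 0 1
  | n + 1 => tmul σ β y (tpow y n)

theorem isPWO_iUnion_support_tpow (y : HahnSeries H K) (hy : ∀ g ∈ y.support, 0 < g) :
    (⋃ n : ℕ, (tpow σ β y n).support).IsPWO := by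
  refine (y.isWF_support.isPWO.addSubmonoid_closure fun g hg => (hy g hg).le).mono ?_
  refine Set.iUnion_subset fun n => ?_
  induction n with
  | zero =>
    intro g hg
    have h0 := support_single_subset hg
    rw [Set.mem_singleton_iff] at h0
    rw [h0, SetLike.mem_coe]
    exact AddSubmonoid.zero_mem _
  | succ n ih =>
    intro g hg
    obtain ⟨i, hi, j, hj, rfl⟩ := support_tmul_subset σ β hg
    exact SetLike.mem_coe.2 (AddSubmonoid.add_mem _ (AddSubmonoid.subset_closure hi)
      (SetLike.mem_coe.1 (ih hj)))

theorem finite_co_support_tpow (y : HahnSeries H K) (hy : ∀ g ∈ y.support, 0 < g) (g : H) :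
    {n : ℕ | (tpow σ β y n).coeff g ≠ 0}.Finite := by
  have hpwo := isPWO_iUnion_support_tpow σ β y hy
  by_cases hg : g ∈ ⋃ n : ℕ, { g | (tpow σ β y n).coeff g ≠ 0 }
  swap
  · exact Set.finite_empty.subset fun n hn => hg (Set.mem_iUnion.2 ⟨n, hn⟩)
  apply hpwo.isWF.induction hg
  intro c hc hind
  refine ((((Finset.addAntidiagonal y.isPWO_support hpwo c).finite_toSet.biUnion fun ij hij =>
      hind ij.snd ?_ ?_).image Nat.succ).union (Set.finite_singleton 0)).subset ?_
  · exact (Finset.mem_addAntidiagonal.1 (Finset.mem_coe.1 hij)).2.1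
  · obtain ⟨hi, _, rfl⟩ := Finset.mem_addAntidiagonal.1 (Finset.mem_coe.1 hij)
    exact lt_add_of_pos_left ij.snd (hy _ hi)
  · rintro (_ | n) hn
    · exact Set.mem_union_right _ (Set.mem_singleton 0)
    · obtain ⟨i, hi, j, hj, rfl⟩ := support_tmul_subset σ β hn
      refine Set.mem_union_left _ ⟨n, Set.mem_iUnion.2 ⟨⟨i, j⟩, Set.mem_iUnion.2 ⟨?_, hj⟩⟩, rfl⟩
      exact Finset.mem_coe.2 (Finset.mem_addAntidiagonal.2
        ⟨hi, Set.mem_iUnion.2 ⟨n, hj⟩, rfl⟩)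

/-- The twisted powers of an element with positive support form a summable family. -/
noncomputable def tpowers (y : HahnSeries H K) (hy : ∀ g ∈ y.support, 0 < g) :
    SummableFamily H K ℕ where
  toFun := tpow σ β y
  isPWO_iUnion_support' := isPWO_iUnion_support_tpow σ β y hy
  finite_co_support' := finite_co_support_tpow σ β y hy

@[simp] theorem tpowers_apply (y : HahnSeries H K) (hy : ∀ g ∈ y.support, 0 < g) (n : ℕ) :
    tpowers σ β y hy n = tpow σ β y n := rfl

theorem tmulFamily_tpowers_eq (y : HahnSeries H K) (hy : ∀ g ∈ y.support, 0 < g) :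
    (tmulFamily σ β y (tpowers σ β y hy)).embDomain ⟨Nat.succ, Nat.succ_injective⟩ =
      tpowers σ β y hy - SummableFamily.ofFinsupp (Finsupp.single 0 (HahnSeries.single (0 : H) (1 : K))) := by
  apply SummableFamily.ext
  rintro (_ | n)
  · rw [SummableFamily.embDomain_notin_range, SummableFamily.sub_apply, tpowers_apply, coe_ofFinsupp]
    · simp [tpow]
    · rw [Set.mem_range, not_exists]
      exact fun n => Nat.succ_ne_zero n
  · refine Eq.trans (embDomain_image _ ⟨Nat.succ, Nat.succ_injective⟩) ?_
    rw [SummableFamily.sub_apply, tmulFamily_apply, tpowers_apply, tpowers_apply, coe_ofFinsupp,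
      Finsupp.single_eq_of_ne (Nat.zero_ne_add_one n).symm]
    rw [sub_zero]
    rfl

theorem tmul_hsum_tpowers (y : HahnSeries H K) (hy : ∀ g ∈ y.support, 0 < g) :
    tmul σ β y (tpowers σ β y hy).hsum =
      (tpowers σ β y hy).hsum - HahnSeries.single (0 : H) (1 : K) := by
  rw [tmul_hsum, ← hsum_embDomain (tmulFamily σ β y (tpowers σ β y hy))
    ⟨Nat.succ, Nat.succ_injective⟩, tmulFamily_tpowers_eq, hsum_sub, hsum_ofFinsupp, Finsupp.sum_single_index rfl]
  rfl

end Twisted3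

/-- For linearly ordered abelian groups `H`, `A`, a field `K`,
a normalized symmetric 2-cocycle `β : H × H → A` and a homomorphism
`σ : A → Kˣ`, the twisted multiplication on `HahnSeries H K` is associative,
commutative, distributes over the (coefficientwise) addition, has
`single 0 1` as multiplicative identity, and every nonzero element has a
multiplicative inverse; hence the twisted Hahn series `K(t^H, β)` form a field. -/
theorem twisted_hahn_series_field
    {K H A : Type*} [Field K]
    [AddCommGroup H] [LinearOrder H] [IsOrderedAddMonoid H]
    [AddCommGroup A] [LinearOrder A] [IsOrderedAddMonoid A]
    (σ : A → Kˣ) (hσ : ∀ a a' : A, σ (a + a') = σ a * σ a')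
    (β : H → H → A)
    (hβsymm : ∀ h h' : H, β h h' = β h' h)
    (hβnorm : ∀ h : H, β h 0 = 0 ∧ β 0 h = 0)
    (hβcoc : ∀ h h' h'' : H, β h h' + β (h + h') h'' = β h' h'' + β h (h' + h'')) :
    (∀ a b c : HahnSeries H K, tmul σ β (tmul σ β a b) c = tmul σ β a (tmul σ β b c)) ∧
    (∀ a b : HahnSeries H K, tmul σ β a b = tmul σ β b a) ∧
    (∀ a b c : HahnSeries H K, tmul σ β a (b + c) = tmul σ β a b + tmul σ β a c) ∧
    (∀ a : HahnSeries H K,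
      tmul σ β a (HahnSeries.single (0 : H) (1 : K)) = a ∧
      tmul σ β (HahnSeries.single (0 : H) (1 : K)) a = a) ∧
    (∀ a : HahnSeries H K, a ≠ 0 →
      ∃ b : HahnSeries H K, tmul σ β a b = HahnSeries.single (0 : H) (1 : K)) := by
  have hone : ∀ a : HahnSeries H K, tmul σ β (HahnSeries.single (0 : H) (1 : K)) a = a :=
    single_zero_one_tmul σ β hσ hβnorm
  refine ⟨tmul_assoc σ β hσ hβcoc, tmul_comm σ β hβsymm, tmul_add σ β,
    fun a => ⟨(tmul_comm σ β hβsymm a _).trans (hone a), hone a⟩, ?_⟩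
  intro a ha
  set r := a.order with hr
  set c := a.coeff a.order with hc
  have hcne : c ≠ 0 := fun h => ha (HahnSeries.coeff_order_eq_zero.mp h)
  set d : K := (c * (σ (-β (-r) r) : K))⁻¹ with hd
  set u := tmul σ β (HahnSeries.single (-r) d) a with hu
  have hu0 : u.coeff 0 = 1 := by
    have h := single_tmul_coeff_add σ β (d := d) (x := a) (a := r) (b := -r)
    rw [neg_add_cancel] at h
    rw [hu, h, hd, ← hc]
    field_simp
  have huneg : ∀ h : H, h < 0 → u.coeff h = 0 := by
    intro h hh
    have heq : h = -r + (r + h) := by abel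
    have h2 := single_tmul_coeff_add σ β (d := d) (x := a) (a := r + h) (b := -r)
    rw [← heq] at h2
    rw [hu, h2]
    have : a.coeff (r + h) = 0 := by
      by_contra hne
      have h3 := HahnSeries.order_le_of_coeff_ne_zero hne
      rw [← hr] at h3
      exact absurd hh (not_lt.mpr ((le_add_iff_nonneg_right r).mp h3))
    rw [this, mul_zero, zero_mul]
  set y := HahnSeries.single (0 : H) (1 : K) - u with hy
  have hysupp : ∀ g ∈ y.support, 0 < g := by
    intro g hg
    by_contra hgle
    push_neg at hgle
    rcases lt_or_eq_of_le hgle with hlt | heq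
    · apply hg
      rw [hy, HahnSeries.coeff_sub, HahnSeries.coeff_single_of_ne (ne_of_lt hlt),
        huneg g hlt, sub_zero]
    · apply hg
      rw [heq, hy, HahnSeries.coeff_sub, HahnSeries.coeff_single_same, hu0, sub_self]
  set S := (tpowers σ β y hysupp).hsum with hS
  have hkey : tmul σ β u S = HahnSeries.single (0 : H) (1 : K) := by
    have hu_eq : u = HahnSeries.single (0 : H) (1 : K) - y := by
      rw [hy, sub_sub_cancel]
    rw [hu_eq, tmul_comm σ β hβsymm, tmul_sub σ β, tmul_comm σ β hβsymm S,
      tmul_comm σ β hβsymm S y, hone S, tmul_hsum_tpowers σ β y hysupp, ← hS,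
      sub_sub_cancel]
  refine ⟨tmul σ β (HahnSeries.single (-r) d) S, ?_⟩
  calc tmul σ β a (tmul σ β (HahnSeries.single (-r) d) S)
      = tmul σ β (tmul σ β a (HahnSeries.single (-r) d)) S :=
        (tmul_assoc σ β hσ hβcoc a _ S).symm
    _ = tmul σ β u S := by rw [tmul_comm σ β hβsymm a, ← hu]
    _ = HahnSeries.single (0 : H) (1 : K) := hkey
end

section
/- Let H and A be linearly ordered abelian groups, (K,v) a field with additive valuation with value group A and cross-section σ : A → Kˣ, and β : H × H → A a normalized symmetric 2-cocycle. Equip the twisted Hahn series field K(t^H,β) with the valuation val(f) = (v(f.coeff h₀), h₀), h₀ = min supp(f), with values in A × H ordered by (z,h) ≤ (z',h') iff h < h' or (h = h' and z ≤ z'). If (K,v) is ω-pseudo complete, then (K(t^H,β), val) is ω-pseudo complete: every pseudo-Cauchy sequence (c_i)_{i∈ℕ} of twisted Hahn series has a pseudo-limit in K(t^H,β). -/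
/-- The minimum of the support of a nonzero Hahn series. -/
noncomputable def minSupp {K H : Type*} [Field K] [AddCommGroup H] [LinearOrder H] [IsOrderedAddMonoid H]
    (f : HahnSeries H K) (hf : f ≠ 0) : H :=
  f.isWF_support.min (HahnSeries.support_nonempty_iff.mpr hf)

/-- The valuation `val f = (v (f.coeff h₀), h₀)`, `h₀ = min supp f`. -/
noncomputable def tval {K H A : Type*} [Field K] [AddCommGroup H] [LinearOrder H] [IsOrderedAddMonoid H]
    [AddCommGroup A] [LinearOrder A] [IsOrderedAddMonoid A]
    (v : K → WithTop A) (f : HahnSeries H K) (hf : f ≠ 0) : WithTop A × H :=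
  (v (f.coeff (minSupp f hf)), minSupp f hf)

/-- The strict order `(z,h) < (z',h') ↔ h < h' ∨ (h = h' ∧ z < z')` on values. -/
def pLt {A H : Type*} [AddCommGroup A] [LinearOrder A] [IsOrderedAddMonoid A] [AddCommGroup H] [LinearOrder H] [IsOrderedAddMonoid H]
    (p q : WithTop A × H) : Prop :=
  p.2 < q.2 ∨ (p.2 = q.2 ∧ p.1 < q.1)

section hs
variable {K H : Type*} [Field K] [AddCommGroup H] [LinearOrder H] [IsOrderedAddMonoid H]

lemma minSupp_coeff_ne {f : HahnSeries H K} (hf : f ≠ 0) : f.coeff (minSupp f hf) ≠ 0 :=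
  (HahnSeries.mem_support f _).mp (f.isWF_support.min_mem _)

lemma coeff_eq_zero_of_lt_minSupp {f : HahnSeries H K} (hf : f ≠ 0) {h : H}
    (hh : h < minSupp f hf) : f.coeff h = 0 := by
  by_contra hne
  exact f.isWF_support.not_lt_min _ ((HahnSeries.mem_support f h).mpr hne) hh

lemma minSupp_eq {f : HahnSeries H K} (hf : f ≠ 0) {h : H}
    (h1 : f.coeff h ≠ 0) (h2 : ∀ g, g < h → f.coeff g = 0) : minSupp f hf = h := by
  have hle : minSupp f hf ≤ h :=
    f.isWF_support.min_le _ ((HahnSeries.mem_support f h).mpr h1)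
  rcases lt_or_eq_of_le hle with hlt | he
  · exact absurd (h2 _ hlt) (minSupp_coeff_ne hf)
  · exact he

lemma hahn_ne_zero_of_coeff {f : HahnSeries H K} {h : H} (hc : f.coeff h ≠ 0) : f ≠ 0 := by
  intro e; rw [e] at hc; simp at hc

end hs

lemma pLt_trans {A H : Type*} [AddCommGroup A] [LinearOrder A] [IsOrderedAddMonoid A] [AddCommGroup H] [LinearOrder H] [IsOrderedAddMonoid H]
    {p q r : WithTop A × H} (h1 : pLt p q) (h2 : pLt q r) : pLt p r := by
  rcases h1 with h1 | ⟨e1, l1⟩ <;> rcases h2 with h2 | ⟨e2, l2⟩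
  · exact Or.inl (h1.trans h2)
  · exact Or.inl (e2 ▸ h1)
  · exact Or.inl (e1 ▸ h2)
  · exact Or.inr ⟨e1.trans e2, l1.trans l2⟩

section kval
variable {K A : Type*} [Field K] [AddCommGroup A] [LinearOrder A] [IsOrderedAddMonoid A]
variable {v : K → WithTop A}

lemma v_neg (hv_top : ∀ x : K, v x = ⊤ ↔ x = 0)
    (hv_mul : ∀ x y : K, v (x * y) = v x + v y) (x : K) : v (-x) = v x := by
  have h1 : v 1 = 0 := by
    have := hv_mul 1 1
    rw [one_mul] at this
    obtain ⟨a, ha⟩ := WithTop.ne_top_iff_exists.mp ((hv_top 1).not.mpr one_ne_zero)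
    rw [← ha] at this
    rw [← ha]
    have h2 : a = a + a := by exact_mod_cast this
    have : a = 0 := left_eq_add.mp h2
    simp [this]
  have hneg1 : v (-1 : K) = 0 := by
    have h2 := hv_mul (-1 : K) (-1)
    rw [neg_one_mul, neg_neg, h1] at h2
    obtain ⟨a, ha⟩ := WithTop.ne_top_iff_exists.mp ((hv_top (-1)).not.mpr (by norm_num))
    rw [← ha] at h2
    rw [← ha]
    have h3 : a + a = 0 := by exact_mod_cast h2.symm
    have : a = 0 := by
      rcases lt_trichotomy a 0 with hl | he | hg
      · have h4 := add_lt_add hl hl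
        rw [h3, add_zero] at h4
        exact absurd h4 (lt_irrefl 0)
      · exact he
      · have h4 := add_lt_add hg hg
        rw [h3, add_zero] at h4
        exact absurd h4 (lt_irrefl 0)
    simp [this]
  rw [← neg_one_mul, hv_mul, hneg1, zero_add]

lemma vK_add_eq (hv_top : ∀ x : K, v x = ⊤ ↔ x = 0)
    (hv_mul : ∀ x y : K, v (x * y) = v x + v y)
    (hv_add : ∀ x y : K, min (v x) (v y) ≤ v (x + y))
    {x y : K} (hxy : v x < v y) : v (x + y) = v x := by
  have hmin : min (v x) (v y) = v x := min_eq_left hxy.le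
  have hge : v x ≤ v (x + y) := hmin ▸ hv_add x y
  rcases eq_or_lt_of_le hge with he | hlt
  · exact he.symm
  · exfalso
    have h2 : min (v (x + y)) (v (-y)) ≤ v (x + y + -y) := hv_add _ _
    rw [add_neg_cancel_right, v_neg hv_top hv_mul] at h2
    have : v x < min (v (x + y)) (v y) := lt_min hlt hxy
    exact absurd h2 (not_le_of_gt this)

end kval

section ultra
variable {K H A : Type*} [Field K] [AddCommGroup H] [LinearOrder H] [IsOrderedAddMonoid H] [AddCommGroup A] [LinearOrder A] [IsOrderedAddMonoid A]
variable {v : K → WithTop A}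

lemma tval_add (hv_top : ∀ x : K, v x = ⊤ ↔ x = 0)
    (hv_mul : ∀ x y : K, v (x * y) = v x + v y)
    (hv_add : ∀ x y : K, min (v x) (v y) ≤ v (x + y))
    {x y : HahnSeries H K} (hx : x ≠ 0) (hy : y ≠ 0)
    (hlt : pLt (tval v y hy) (tval v x hx)) :
    ∃ hxy : x + y ≠ 0, tval v (x + y) hxy = tval v y hy := by
  set hy0 := minSupp y hy with hhy0
  rcases hlt with hlt | ⟨heq, hltv⟩
  · -- minSupp y < minSupp x
    have hxz : ∀ g, g ≤ hy0 → x.coeff g = 0 := fun g hg =>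
      coeff_eq_zero_of_lt_minSupp hx (lt_of_le_of_lt hg hlt)
    have hco : (x + y).coeff hy0 = y.coeff hy0 := by
      rw [HahnSeries.coeff_add, hxz hy0 le_rfl, zero_add]
    have hne : (x + y).coeff hy0 ≠ 0 := hco ▸ minSupp_coeff_ne hy
    have hxy : x + y ≠ 0 := hahn_ne_zero_of_coeff hne
    have hbelow : ∀ g, g < hy0 → (x + y).coeff g = 0 := fun g hg => by
      rw [HahnSeries.coeff_add, hxz g hg.le, coeff_eq_zero_of_lt_minSupp hy hg, add_zero]
    have hm : minSupp (x + y) hxy = hy0 := minSupp_eq hxy hne hbelow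
    exact ⟨hxy, by simp only [tval, hm, hco]; rfl⟩
  · -- equal minSupp, valuations of coefficients differ
    have heq' : minSupp x hx = hy0 := heq.symm
    have hvco : v ((x + y).coeff hy0) = v (y.coeff hy0) := by
      rw [HahnSeries.coeff_add, add_comm]
      have hltv' : v (y.coeff hy0) < v (x.coeff hy0) := by
        simpa [tval, heq', hhy0] using hltv
      exact vK_add_eq hv_top hv_mul hv_add hltv'
    have hne : (x + y).coeff hy0 ≠ 0 := by
      intro e
      rw [e, (hv_top 0).mpr rfl] at hvco
      exact (hv_top _).not.mpr (minSupp_coeff_ne hy) hvco.symm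
    have hxy : x + y ≠ 0 := hahn_ne_zero_of_coeff hne
    have hbelow : ∀ g, g < hy0 → (x + y).coeff g = 0 := fun g hg => by
      rw [HahnSeries.coeff_add, coeff_eq_zero_of_lt_minSupp hx (heq' ▸ hg),
        coeff_eq_zero_of_lt_minSupp hy hg, add_zero]
    have hm : minSupp (x + y) hxy = hy0 := minSupp_eq hxy hne hbelow
    exact ⟨hxy, by simp only [tval, hm, hvco]; rfl⟩

end ultra


open Classical in
/-- The valuation extended by `val 0 = ∞`. -/
noncomputable def Val {K H A : Type*} [Field K] [AddCommGroup H] [LinearOrder H] [IsOrderedAddMonoid H]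
    [AddCommGroup A] [LinearOrder A] [IsOrderedAddMonoid A]
    (v : K → WithTop A) (f : HahnSeries H K) : WithTop (WithTop A × H) :=
  if hf : f = 0 then ⊤ else ((tval v f hf : WithTop A × H) : WithTop (WithTop A × H))

/-- Extension of a strict order to `WithTop`, with `⊤` the largest element. -/
def vLt {P : Type*} (lt : P → P → Prop) (x y : WithTop P) : Prop :=
  x ≠ ⊤ ∧ (y = ⊤ ∨ ∃ p q : P, x = (p : WithTop P) ∧ y = (q : WithTop P) ∧ lt p q)

/-- If `(K, v)` is ω-pseudo complete, then the twisted Hahn series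
field `K(t^H,β)` with the valuation `val f = (v (f.coeff h₀), h₀)`,
`h₀ = min supp f`, is ω-pseudo complete: every pseudo-Cauchy sequence has a
pseudo-limit. -/
theorem twisted_hahn_series_pseudo_complete
    {K H A : Type*} [Field K]
    [AddCommGroup H] [LinearOrder H] [IsOrderedAddMonoid H] [AddCommGroup A] [LinearOrder A] [IsOrderedAddMonoid A]
    (v : K → WithTop A)
    (hv_top : ∀ x : K, v x = ⊤ ↔ x = 0)
    (hv_mul : ∀ x y : K, v (x * y) = v x + v y)
    (hv_add : ∀ x y : K, min (v x) (v y) ≤ v (x + y))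
    (hv_surj : ∀ a : A, ∃ x : K, v x = (a : WithTop A))
    (σ : A → Kˣ) (hσ : ∀ a a' : A, σ (a + a') = σ a * σ a')
    (hσ_cross : ∀ a : A, v ((σ a : K)) = (a : WithTop A))
    (β : H → H → A)
    (hβsymm : ∀ h h' : H, β h h' = β h' h)
    (hβnorm : ∀ h : H, β h 0 = 0 ∧ β 0 h = 0)
    (hβcoc : ∀ h h' h'' : H, β h h' + β (h + h') h'' = β h' h'' + β h (h' + h''))
    (hKpc : ∀ c : ℕ → K,
      (∃ N : ℕ, ∀ i j k : ℕ, N ≤ i → i < j → j < k → v (c j - c i) < v (c k - c j)) →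
      ∃ b : K, ∃ N : ℕ, ∀ i j : ℕ, N ≤ i → i < j → v (b - c i) < v (b - c j)) :
    ∀ c : ℕ → HahnSeries H K,
      (∃ N : ℕ, ∀ i j k : ℕ, N ≤ i → i < j → j < k →
        vLt pLt (Val v (c j - c i)) (Val v (c k - c j))) →
      ∃ b : HahnSeries H K, ∃ N : ℕ, ∀ i j : ℕ, N ≤ i → i < j →
        vLt pLt (Val v (b - c i)) (Val v (b - c j)) := by
  classical
  intro c hpc
  obtain ⟨N, hc⟩ := hpc
  have hVal_eq : ∀ (f : HahnSeries H K) (hf : f ≠ 0),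
      Val v f = ((tval v f hf : WithTop A × H) : WithTop (WithTop A × H)) :=
    fun f hf => dif_neg hf
  have hVal_ne : ∀ f : HahnSeries H K, Val v f ≠ ⊤ → f ≠ 0 :=
    fun f ht hf => ht (dif_pos hf)
  have hDne : ∀ i, N ≤ i → c (i + 1) - c i ≠ 0 := by
    intro i hi
    exact hVal_ne _ (hc i (i + 1) (i + 2) hi (by omega) (by omega)).1
  set γ : ℕ → WithTop A × H := fun i =>
    if h : c (i + 1) - c i = 0 then (⊤, 0) else tval v (c (i + 1) - c i) h with hγdef
  have hγD : ∀ (i : ℕ) (hi : N ≤ i), γ i = tval v (c (i + 1) - c i) (hDne i hi) :=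
    fun i hi => dif_neg (hDne i hi)
  have hcoe : ∀ p q : WithTop A × H,
      vLt pLt ((p : WithTop (WithTop A × H))) ((q : WithTop (WithTop A × H))) → pLt p q := by
    rintro p q ⟨-, h | ⟨p', q', hp, hq, hlt⟩⟩
    · exact absurd h WithTop.coe_ne_top
    · rw [WithTop.coe_eq_coe] at hp hq
      rw [hp, hq]; exact hlt
  have hγsucc : ∀ i, N ≤ i → pLt (γ i) (γ (i + 1)) := by
    intro i hi
    have h := hc i (i + 1) (i + 2) hi (by omega) (by omega)
    rw [hVal_eq _ (hDne i hi), hVal_eq _ (hDne (i + 1) (by omega))] at h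
    rw [hγD i hi, hγD (i + 1) (by omega)]
    exact hcoe _ _ h
  have hγ : ∀ i j, N ≤ i → i < j → pLt (γ i) (γ j) := by
    intro i j hi hij
    have hij' : i + 1 ≤ j := hij
    induction j, hij' using Nat.le_induction with
    | base => exact hγsucc i hi
    | succ j hj IH =>
      exact pLt_trans (IH (by omega)) (hγsucc j (by omega))
  have hval : ∀ i j, N ≤ i → i < j →
      ∃ h : c j - c i ≠ 0, tval v (c j - c i) h = γ i := by
    intro i j hi hij
    have hij' : i + 1 ≤ j := hij
    induction j, hij' using Nat.le_induction with
    | base => exact ⟨hDne i hi, (hγD i hi).symm⟩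
    | succ j hj IH =>
      obtain ⟨hne, heq⟩ := IH (by omega)
      have hjN : N ≤ j := le_trans hi (by omega)
      have hlt : pLt (tval v (c j - c i) hne) (tval v (c (j + 1) - c j) (hDne j hjN)) := by
        rw [heq, ← hγD j hjN]
        exact hγ i j hi (by omega)
      obtain ⟨hs, he⟩ := tval_add hv_top hv_mul hv_add (hDne j hjN) hne hlt
      have hsum : c (j + 1) - c i = (c (j + 1) - c j) + (c j - c i) := by abel
      rw [hsum]
      exact ⟨hs, he.trans heq⟩
  have hmono : ∀ i j, N ≤ i → i ≤ j → (γ i).2 ≤ (γ j).2 := by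
    intro i j hi hij
    rcases eq_or_lt_of_le hij with rfl | hlt
    · exact le_rfl
    · rcases hγ i j hi hlt with h | ⟨h, -⟩
      · exact h.le
      · exact h.le
  by_cases hcase : ∀ i, N ≤ i → ∃ j, i < j ∧ (γ i).2 < (γ j).2
  · -- Case B: the support minima grow unboundedly along the sequence
    set P : H → Prop := fun h => ∃ i, N ≤ i ∧ h < (γ i).2 with hPdef
    have hwd : ∀ (h : H) (i j : ℕ), N ≤ i → N ≤ j → h < (γ i).2 → h < (γ j).2 →
        (c i).coeff h = (c j).coeff h := by
      have key : ∀ i j, N ≤ i → i < j → ∀ h : H, h < (γ i).2 →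
          (c i).coeff h = (c j).coeff h := by
        intro i j hi hij h hh
        obtain ⟨hne, heq⟩ := hval i j hi hij
        have hms : minSupp (c j - c i) hne = (γ i).2 := congrArg Prod.snd heq
        have h3 : h < minSupp (c j - c i) hne := by rw [hms]; exact hh
        have h4 := coeff_eq_zero_of_lt_minSupp hne h3
        rw [HahnSeries.coeff_sub, sub_eq_zero] at h4
        exact h4.symm
      intro h i j hi hj hhi hhj
      rcases lt_trichotomy i j with hij | rfl | hij
      · exact key i j hi hij h hhi
      · rfl
      · exact (key j i hj hij h hhj).symm
    have hFeq : ∀ (h : H) (i : ℕ), N ≤ i → h < (γ i).2 →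
        (if hP : P h then (c (Classical.choose hP)).coeff h else 0) = (c i).coeff h := by
      intro h i hi hh
      have hP : P h := ⟨i, hi, hh⟩
      rw [dif_pos hP]
      exact hwd h _ i (Classical.choose_spec hP).1 hi (Classical.choose_spec hP).2 hh
    have hFP : ∀ h : H,
        (if hP : P h then (c (Classical.choose hP)).coeff h else 0) ≠ 0 → P h := by
      intro h hne
      by_contra hP
      rw [dif_neg hP] at hne
      exact hne rfl
    have hpwo : (Function.support
        (fun h => if hP : P h then (c (Classical.choose hP)).coeff h else 0)).IsPWO := by
      apply Set.IsWF.isPWO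
      rw [Set.isWF_iff_no_descending_seq]
      intro f hf hmem
      obtain ⟨i0, hi0, hlt0⟩ := hFP _ (hmem 0)
      refine Set.isWF_iff_no_descending_seq.mp (c i0).isWF_support f hf ?_
      intro n
      have hn := hmem n
      rw [Function.mem_support] at hn
      have hfn : f n < (γ i0).2 :=
        lt_of_le_of_lt (hf.antitone (Nat.zero_le n)) hlt0
      rw [HahnSeries.mem_support, ← hFeq _ i0 hi0 hfn]
      exact hn
    set b : HahnSeries H K :=
      ⟨fun h => if hP : P h then (c (Classical.choose hP)).coeff h else 0, hpwo⟩ with hbdef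
    have hbco : ∀ (h : H) (i : ℕ), N ≤ i → h < (γ i).2 → b.coeff h = (c i).coeff h := hFeq
    have hblim : ∀ i, N ≤ i → ∃ hb : b - c i ≠ 0, tval v (b - c i) hb = γ i := by
      intro i hi
      obtain ⟨j, hij, hγij⟩ := hcase i hi
      have hj : N ≤ j := le_trans hi hij.le
      obtain ⟨hne, heq⟩ := hval i j hi hij
      have hms : minSupp (c j - c i) hne = (γ i).2 := congrArg Prod.snd heq
      have hcoeq : ∀ h : H, h < (γ j).2 → (b - c i).coeff h = (c j - c i).coeff h := by
        intro h hh
        rw [HahnSeries.coeff_sub, HahnSeries.coeff_sub, hbco h j hj hh]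
      have hcne : (b - c i).coeff ((γ i).2) ≠ 0 := by
        rw [hcoeq _ hγij, ← hms]
        exact minSupp_coeff_ne hne
      have hb : b - c i ≠ 0 := hahn_ne_zero_of_coeff hcne
      have hbelow : ∀ g, g < (γ i).2 → (b - c i).coeff g = 0 := by
        intro g hg
        rw [hcoeq g (hg.trans hγij)]
        exact coeff_eq_zero_of_lt_minSupp hne (by rw [hms]; exact hg)
      have hm : minSupp (b - c i) hb = (γ i).2 := minSupp_eq hb hcne hbelow
      refine ⟨hb, ?_⟩
      have htv : tval v (b - c i) hb = tval v (c j - c i) hne := by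
        simp only [tval]
        rw [hm, hcoeq _ hγij, hms]
      exact htv.trans heq
    refine ⟨b, N, fun i j hi hij => ?_⟩
    obtain ⟨hbi, heqi⟩ := hblim i hi
    obtain ⟨hbj, heqj⟩ := hblim j (le_trans hi hij.le)
    refine ⟨?_, Or.inr ⟨γ i, γ j, ?_, ?_, hγ i j hi hij⟩⟩
    · rw [hVal_eq _ hbi]; exact WithTop.coe_ne_top
    · rw [hVal_eq _ hbi, heqi]
    · rw [hVal_eq _ hbj, heqj]
  · -- Case A: the support minima are eventually constant
    push_neg at hcase
    obtain ⟨M, hM, hMax⟩ := hcase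
    set h0 : H := (γ M).2 with hh0
    have hconst : ∀ j, M ≤ j → (γ j).2 = h0 := by
      intro j hj
      rcases eq_or_lt_of_le hj with rfl | hlt
      · rfl
      · exact le_antisymm (hMax j hlt) (hmono M j hM hj)
    set a : ℕ → K := fun i => (c i).coeff h0 with hadef
    have hγ1 : ∀ i j, M ≤ i → i < j → (γ i).1 < (γ j).1 := by
      intro i j hi hij
      rcases hγ i j (le_trans hM hi) hij with h | ⟨-, h⟩
      · rw [hconst i hi, hconst j (le_trans hi hij.le)] at h
        exact absurd h (lt_irrefl _)
      · exact h
    have hva : ∀ i j, M ≤ i → i < j → v (a j - a i) = (γ i).1 := by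
      intro i j hi hij
      obtain ⟨hne, heq⟩ := hval i j (le_trans hM hi) hij
      have hms : minSupp (c j - c i) hne = h0 :=
        (congrArg Prod.snd heq).trans (hconst i hi)
      have h1 : v ((c j - c i).coeff (minSupp (c j - c i) hne)) = (γ i).1 :=
        congrArg Prod.fst heq
      rw [hms] at h1
      have h2 : a j - a i = (c j - c i).coeff h0 := (HahnSeries.coeff_sub).symm
      rw [h2, h1]
    obtain ⟨bK, N1, hbK⟩ := hKpc a ⟨M, fun i j k hi hij hjk => by
      rw [hva i j hi hij, hva j k (le_trans hi hij.le) hjk]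
      exact hγ1 i j hi hij⟩
    have hane : ∀ i, N1 ≤ i → bK - a i ≠ 0 := by
      intro i hi he
      have h1 := hbK i (i + 1) hi (by omega)
      have h2 : v (bK - a i) ≠ ⊤ := ne_top_of_lt h1
      exact h2 ((hv_top _).mpr he)
    have hGsupp : Function.support
        (fun h => if h < h0 then (c M).coeff h else if h = h0 then bK else 0)
          ⊆ (c M).support ∪ {h0} := by
      intro h hh
      rw [Function.mem_support] at hh
      by_cases h1 : h < h0
      · left
        rw [HahnSeries.mem_support]
        rwa [if_pos h1] at hh
      · by_cases h2 : h = h0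
        · right; exact h2
        · rw [if_neg h1, if_neg h2] at hh
          exact absurd rfl hh
    set b : HahnSeries H K :=
      ⟨fun h => if h < h0 then (c M).coeff h else if h = h0 then bK else 0,
        Set.IsPWO.mono ((c M).isPWO_support.union (Set.finite_singleton h0).isPWO) hGsupp⟩
      with hbdef
    have hbc1 : ∀ h : H, h < h0 → b.coeff h = (c M).coeff h := fun h hh => if_pos hh
    have hbc2 : b.coeff h0 = bK := by
      show (if h0 < h0 then (c M).coeff h0 else if h0 = h0 then bK else 0) = bK
      rw [if_neg (lt_irrefl h0), if_pos rfl]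
    have hblim : ∀ i, max M N1 ≤ i →
        ∃ hb : b - c i ≠ 0, tval v (b - c i) hb = (v (bK - a i), h0) := by
      intro i hi
      have hiM : M ≤ i := le_trans (le_max_left _ _) hi
      have hiN1 : N1 ≤ i := le_trans (le_max_right _ _) hi
      have hcbelow : ∀ h : H, h < h0 → (c i).coeff h = (c M).coeff h := by
        intro h hh
        rcases eq_or_lt_of_le hiM with rfl | hlt
        · rfl
        · obtain ⟨hne, heq⟩ := hval M i hM hlt
          have hms : minSupp (c i - c M) hne = h0 :=
            (congrArg Prod.snd heq).trans (hconst M le_rfl)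
          have h4 := coeff_eq_zero_of_lt_minSupp hne (by rw [hms]; exact hh)
          rw [HahnSeries.coeff_sub, sub_eq_zero] at h4
          exact h4
      have hch0 : (b - c i).coeff h0 = bK - a i := by
        rw [HahnSeries.coeff_sub, hbc2]
      have hcne : (b - c i).coeff h0 ≠ 0 := by
        rw [hch0]; exact hane i hiN1
      have hbelow : ∀ g, g < h0 → (b - c i).coeff g = 0 := by
        intro g hg
        rw [HahnSeries.coeff_sub, hbc1 g hg, hcbelow g hg, sub_self]
      have hb : b - c i ≠ 0 := hahn_ne_zero_of_coeff hcne
      have hm : minSupp (b - c i) hb = h0 := minSupp_eq hb hcne hbelow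
      refine ⟨hb, ?_⟩
      simp only [tval]
      rw [hm, hch0]
    refine ⟨b, max M N1, fun i j hi hij => ?_⟩
    obtain ⟨hbi, heqi⟩ := hblim i hi
    obtain ⟨hbj, heqj⟩ := hblim j (le_trans hi hij.le)
    refine ⟨?_, Or.inr ⟨(v (bK - a i), h0), (v (bK - a j), h0), ?_, ?_,
      Or.inr ⟨rfl, hbK i j (le_trans (le_max_right _ _) hi) hij⟩⟩⟩
    · rw [hVal_eq _ hbi]; exact WithTop.coe_ne_top
    · rw [hVal_eq _ hbi, heqi]
    · rw [hVal_eq _ hbj, heqj]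
end

section
/- There exists a linearly ordered abelian group G with a smallest positive element e (i.e. G is a Z-group: for every integer n ≥ 1 and every g ∈ G there is exactly one k ∈ {0, 1, …, n−1} such that g − k·e ∈ nG) such that the cyclic subgroup generated by e is not a direct summand of G: there is no subgroup B of G with ⟨e⟩ ∩ B = {0} and ⟨e⟩ + B = G. -/
namespace ZGroupNotSplit

/-- Partial sums of factorials. -/
def aInt (n : ℕ) : ℤ := ∑ k ∈ Finset.range n, (k.factorial : ℤ)

/-- The generators `(1/N!, a_N/N!)`. -/
def gQ (N : ℕ) : ℚ × ℚ := ((N.factorial : ℚ)⁻¹, (aInt N : ℚ) * (N.factorial : ℚ)⁻¹)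

/-- The smallest positive element. -/
def eQ : ℚ × ℚ := (0, 1)

lemma factQ_ne (N : ℕ) : (N.factorial : ℚ) ≠ 0 := by
  exact_mod_cast N.factorial_ne_zero

lemma zsmul_eQ (c : ℤ) : c • eQ = (0, (c : ℚ)) := by
  simp [eQ, Prod.ext_iff]

lemma step (N : ℕ) : ((N : ℤ) + 1) • gQ (N + 1) = gQ N + eQ := by
  have h1 := factQ_ne N
  have h2 := factQ_ne (N + 1)
  have ha : aInt (N + 1) = aInt N + (N.factorial : ℤ) := by
    simp [aInt, Finset.sum_range_succ]
  rw [Prod.ext_iff]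
  constructor
  · simp only [Prod.smul_fst, Prod.fst_add, gQ, eQ, zsmul_eq_mul, Int.cast_add,
      Int.cast_natCast, Int.cast_one, Nat.factorial_succ, Prod.fst_mul, Prod.fst_natCast, Prod.fst_one]
    push_cast
    field_simp
    try ring
  · simp only [Prod.smul_snd, Prod.snd_add, gQ, eQ, zsmul_eq_mul, ha, Int.cast_add,
      Int.cast_natCast, Int.cast_one, Nat.factorial_succ, Prod.snd_mul, Prod.snd_natCast, Prod.snd_one]
    push_cast
    field_simp
    try ring

lemma shift (N : ℕ) (m j : ℤ) :
    m • gQ N + j • eQ = (m * ((N : ℤ) + 1)) • gQ (N + 1) + (j - m) • eQ := by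
  rw [mul_smul, step, smul_add, sub_smul]
  abel

lemma shiftMany (k N : ℕ) (m j : ℤ) :
    ∃ j' : ℤ, m • gQ N + j • eQ
      = (m * (((N + k).factorial / N.factorial : ℕ) : ℤ)) • gQ (N + k) + j' • eQ := by
  induction k with
  | zero =>
      refine ⟨j, ?_⟩
      simp [Nat.div_self N.factorial_pos]
  | succ k ih =>
      obtain ⟨j', hj'⟩ := ih
      set R : ℕ := (N + k).factorial / N.factorial with hR
      have hd : N.factorial ∣ (N + k).factorial :=
        Nat.factorial_dvd_factorial (Nat.le_add_right _ _)
      have hsucc : (N + (k + 1)).factorial / N.factorial = ((N : ℕ) + k + 1) * R := by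
        rw [show N + (k + 1) = (N + k) + 1 from rfl, Nat.factorial_succ,
          Nat.mul_div_assoc _ hd]
      refine ⟨j' - m * (R : ℤ), ?_⟩
      rw [hj', shift]
      congr 1
      · congr 1
        rw [hsucc]
        push_cast
        ring
  
/-- The underlying set of the group. -/
def inG (p : ℚ × ℚ) : Prop := ∃ (N : ℕ) (m j : ℤ), p = m • gQ N + j • eQ

lemma inG_add {p q : ℚ × ℚ} (hp : inG p) (hq : inG q) : inG (p + q) := by
  obtain ⟨N, m, j, hp⟩ := hp
  obtain ⟨N', m', j', hq⟩ := hq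
  obtain ⟨j1, h1⟩ := shiftMany N' N m j
  obtain ⟨j2, h2⟩ := shiftMany N N' m' j'
  rw [Nat.add_comm N' N] at h2
  refine ⟨N + N', m * (((N + N').factorial / N.factorial : ℕ) : ℤ)
    + m' * (((N + N').factorial / N'.factorial : ℕ) : ℤ), j1 + j2, ?_⟩
  rw [hp, hq, h1, h2, add_smul, add_smul]
  abel

lemma inG_neg {p : ℚ × ℚ} (hp : inG p) : inG (-p) := by
  obtain ⟨N, m, j, hp⟩ := hp
  exact ⟨N, -m, -j, by rw [hp, neg_add, neg_smul, neg_smul]⟩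

lemma inG_zero : inG 0 := ⟨0, 0, 0, by simp⟩

lemma inG_eQ : inG eQ := ⟨0, 0, 1, by simp⟩

lemma inG_gQ (N : ℕ) : inG (gQ N) := ⟨N, 1, 0, by simp⟩

/-- If the first coordinate vanishes, the element is an integer multiple of `eQ`. -/
lemma first_eq_zero {p : ℚ × ℚ} (h : inG p) (h0 : p.1 = 0) : ∃ j : ℤ, p = j • eQ := by
  obtain ⟨N, m, j, hp⟩ := h
  have h1 : p.1 = (m : ℚ) * (N.factorial : ℚ)⁻¹ := by
    rw [hp]; simp [gQ, eQ, zsmul_eq_mul]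
  have hm : (m : ℚ) = 0 := by
    rcases mul_eq_zero.mp (h1 ▸ h0).symm.symm with h | h
    · exact h
    · exact absurd (inv_eq_zero.mp h) (factQ_ne N)
  have hm0 : m = 0 := by exact_mod_cast hm
  exact ⟨j, by rw [hp, hm0, zero_smul, zero_add]⟩

/-- The group as a subgroup of the lexicographic product. -/
def G : AddSubgroup (ℚ ×ₗ ℚ) where
  carrier := {p | inG (ofLex p)}
  zero_mem' := inG_zero
  add_mem' := fun ha hb => inG_add ha hb
  neg_mem' := fun ha => inG_neg ha

/-- the distinguished elements as members of `G` -/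
def eG : G := ⟨toLex eQ, inG_eQ⟩

def gG (N : ℕ) : G := ⟨toLex (gQ N), inG_gQ N⟩

lemma coe_sub (a b : G) : (ofLex ((a - b : G) : ℚ ×ₗ ℚ)) = ofLex (a : ℚ ×ₗ ℚ) - ofLex (b : ℚ ×ₗ ℚ) := rfl

lemma coe_nsmul (n : ℕ) (a : G) : (ofLex ((n • a : G) : ℚ ×ₗ ℚ)) = n • ofLex (a : ℚ ×ₗ ℚ) := rfl

lemma coe_zsmul (n : ℤ) (a : G) : (ofLex ((n • a : G) : ℚ ×ₗ ℚ)) = n • ofLex (a : ℚ ×ₗ ℚ) := rfl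

lemma coe_add (a b : G) : (ofLex ((a + b : G) : ℚ ×ₗ ℚ)) = ofLex (a : ℚ ×ₗ ℚ) + ofLex (b : ℚ ×ₗ ℚ) := rfl

/-- torsion-freeness on `e` -/
lemma zsmul_eG_eq_zero {c : ℤ} (h : c • eG = 0) : c = 0 := by
  have h2 : c • eQ = 0 := by
    have := congrArg (fun x : G => ofLex (x : ℚ ×ₗ ℚ)) h
    simpa [coe_zsmul, eG] using this
  have h3 := congrArg Prod.snd h2
  rw [zsmul_eQ] at h3
  have h4 : (c : ℚ) = 0 := by simpa using h3
  exact_mod_cast h4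

lemma step_G (N : ℕ) : ((N : ℤ) + 1) • gG (N + 1) = gG N + eG := by
  apply Subtype.ext
  exact step N

lemma n_dvd_ratio (n N : ℕ) (hn : 1 ≤ n) : n ∣ (N + n).factorial / N.factorial := by
  have h := Nat.choose_mul_factorial_mul_factorial (Nat.le_add_left n N)
  rw [Nat.add_sub_cancel] at h
  have heq : (N + n).factorial / N.factorial = (N + n).choose n * n.factorial :=
    Nat.div_eq_of_eq_mul_left N.factorial_pos h.symm
  rw [heq]
  exact Dvd.dvd.mul_left (Nat.dvd_factorial hn le_rfl) _

/-- The impossible recurrence. -/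
lemma no_seq (z : ℕ → ℤ) (h : ∀ N : ℕ, ((N : ℤ) + 1) * z (N + 1) = z N + 1) : False := by
  set b : ℕ := (z 1).natAbs + 1 with hb
  have key : ∀ N : ℕ, 1 ≤ N → (z N).natAbs ≤ b := by
    intro N hN
    induction N with
    | zero => omega
    | succ N ih =>
        rcases Nat.eq_zero_or_pos N with h0 | h0
        · subst h0
          simp only [Nat.zero_add]
          omega
        · have hN' := ih h0
          have hnat : (N + 1) * (z (N + 1)).natAbs = (z N + 1).natAbs := by
            have := congrArg Int.natAbs (h N)
            rwa [Int.natAbs_mul, show ((N : ℤ) + 1).natAbs = N + 1 by omega] at this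
          have h3 : (N + 1) * (z (N + 1)).natAbs ≤ b + 1 := by rw [hnat]; omega
          have h2 : 2 * (z (N + 1)).natAbs ≤ (N + 1) * (z (N + 1)).natAbs :=
            Nat.mul_le_mul_right _ (by omega)
          have h4 : 2 * (z (N + 1)).natAbs ≤ b + 1 := le_trans h2 h3
          omega
  have hz1 : (z (b + 1)).natAbs ≤ b := key _ (by omega)
  have h1 : (b + 2) * (z (b + 2)).natAbs = (z (b + 1) + 1).natAbs := by
    have := congrArg Int.natAbs (h (b + 1))
    rwa [Int.natAbs_mul, show (((b + 1 : ℕ) : ℤ) + 1).natAbs = b + 2 by omega] at this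
  have hz2 : z (b + 2) = 0 := by
    by_contra hne
    have hpos : 0 < (z (b + 2)).natAbs := by omega
    have hge : b + 2 ≤ (b + 2) * (z (b + 2)).natAbs := Nat.le_mul_of_pos_right _ hpos
    rw [h1] at hge
    omega
  have h2 : (b + 3) * (z (b + 3)).natAbs = 1 := by
    have := congrArg Int.natAbs (h (b + 2))
    rw [Int.natAbs_mul, show (((b + 2 : ℕ) : ℤ) + 1).natAbs = b + 3 by omega, hz2] at this
    simpa using this
  rcases Nat.eq_zero_or_pos (z (b + 3)).natAbs with h0 | h0
  · rw [h0, Nat.mul_zero] at h2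
    omega
  · have h5 : b + 3 ≤ (b + 3) * (z (b + 3)).natAbs := Nat.le_mul_of_pos_right _ h0
    rw [h2] at h5
    omega

theorem main :
    ∃ (G : Type) (inst : AddCommGroup G) (instOrd : LinearOrder G)
      (_ : IsOrderedAddMonoid G) (e : G),
      letI := inst
      (0 < e ∧ (∀ g : G, 0 < g → e ≤ g)) ∧
      (∀ n : ℕ, 1 ≤ n → ∀ g : G,
        ∃! k : ℕ, k < n ∧ ∃ g' : G, g - (k : ℕ) • e = (n : ℕ) • g') ∧
      ¬ ∃ B : AddSubgroup G,
          (AddSubgroup.zmultiples e) ⊓ B = ⊥ ∧ (AddSubgroup.zmultiples e) ⊔ B = ⊤ := by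

  refine ⟨ZGroupNotSplit.G, inferInstance, inferInstance, inferInstance, eG, ⟨?_, ?_⟩, ?_, ?_⟩
  · -- 0 < e
    show (0 : ℚ ×ₗ ℚ) < toLex eQ
    rw [show (0 : ℚ ×ₗ ℚ) = toLex (0, 0) from rfl, Prod.Lex.lt_iff]
    right
    exact ⟨rfl, by norm_num [eQ]⟩
  · -- e smallest positive
    rintro ⟨g, hg⟩ hpos
    have hpos' : (0 : ℚ ×ₗ ℚ) < g := hpos
    rw [show (0 : ℚ ×ₗ ℚ) = toLex (0, 0) from rfl,
      show g = toLex (ofLex g) from rfl, Prod.Lex.lt_iff] at hpos'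
    show toLex eQ ≤ g
    rw [show g = toLex (ofLex g) from rfl, Prod.Lex.le_iff]
    rcases hpos' with h1 | ⟨h1, h2⟩
    · left; simpa [eQ] using h1
    · right
      obtain ⟨j, hj⟩ := first_eq_zero hg (show (ofLex g).1 = 0 from h1.symm)
      have hsnd : (ofLex g).2 = (j : ℚ) := by rw [hj, zsmul_eQ]
      have : (0 : ℚ) < (j : ℚ) := hsnd ▸ h2
      have hj1 : (1 : ℤ) ≤ j := by exact_mod_cast this
      constructor
      · simpa [eQ] using h1
      · simp only [ofLex_toLex]
        rw [hsnd]
        show (1 : ℚ) ≤ (j : ℚ)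
        exact_mod_cast hj1
  · -- Z-group property
    intro n hn g
    -- existence
    obtain ⟨N, m, j, hrep⟩ := g.2
    obtain ⟨j', hj'⟩ := shiftMany n N m j
    obtain ⟨s, hs⟩ := n_dvd_ratio n N hn
    set M := N + n with hM
    set k : ℤ := j' % (n : ℤ) with hk
    have hn0 : (0 : ℤ) < (n : ℤ) := by exact_mod_cast hn
    have hk0 : 0 ≤ k := Int.emod_nonneg j' (by omega)
    have hkn : k < (n : ℤ) := Int.emod_lt_of_pos j' hn0
    set q : ℤ := j' / (n : ℤ) with hq
    have hjq : (n : ℤ) * q + k = j' := Int.mul_ediv_add_emod j' (n : ℤ)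
    have hval : inG ((m * (s : ℤ)) • gQ M + q • eQ) := by
      apply inG_add
      · obtain ⟨Nv, mv, jv, hv⟩ := inG_gQ M
        exact ⟨Nv, (m * (s : ℤ)) * mv, (m * (s : ℤ)) * jv, by
          rw [hv, smul_add, ← mul_smul, ← mul_smul]⟩
      · exact ⟨0, 0, q, by simp⟩
    set g' : ZGroupNotSplit.G := ⟨toLex ((m * (s : ℤ)) • gQ M + q • eQ), hval⟩ with hg'
    have hmain : g - (k.toNat : ℕ) • eG = (n : ℕ) • g' := by
      apply Subtype.ext
      show ofLex (g : ℚ ×ₗ ℚ) - (k.toNat : ℕ) • eQ = (n : ℕ) • ((m * (s : ℤ)) • gQ M + q • eQ)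
      have hcoeff : (m * (((M).factorial / N.factorial : ℕ) : ℤ)) = (n : ℤ) * (m * (s : ℤ)) := by
        rw [hs]; push_cast; ring
      have e1 : (k.toNat : ℕ) • eQ = k • eQ := by
        rw [← natCast_zsmul eQ k.toNat, Int.toNat_of_nonneg hk0]
      have e2 : (n : ℕ) • ((m * (s : ℤ)) • gQ M + q • eQ)
          = ((n : ℤ) * (m * (s : ℤ))) • gQ M + ((n : ℤ) * q) • eQ := by
        rw [← natCast_zsmul ((m * (s : ℤ)) • gQ M + q • eQ) n, smul_add, ← mul_smul, ← mul_smul]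
      rw [hrep, hj', e1, e2, hcoeff, show (n : ℤ) * q = j' - k by omega, sub_smul]
      abel
    refine ⟨k.toNat, ⟨by omega, g', hmain⟩, ?_⟩
    -- uniqueness
    rintro y ⟨hy, gy, hgy⟩
    have hdiff : ((y : ℤ) - (k.toNat : ℤ)) • eG = (n : ℕ) • (g' - gy) := by
      have := congrArg₂ (· - ·) hmain hgy
      simp only [smul_sub] at this ⊢
      rw [← this]
      have h1 : ((y : ℤ)) • eG = (y : ℕ) • eG := (natCast_zsmul _ _)
      have h2 : ((k.toNat : ℤ)) • eG = (k.toNat : ℕ) • eG := (natCast_zsmul _ _)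
      rw [sub_smul, h1, h2]
      abel
    -- the difference g' - gy has first coordinate determined
    have htn : ((k.toNat : ℕ) : ℤ) = k := Int.toNat_of_nonneg hk0
    rw [htn] at hdiff
    obtain ⟨jd, hjd⟩ : ∃ jd : ℤ, ofLex ((g' - gy : ZGroupNotSplit.G) : ℚ ×ₗ ℚ) = jd • eQ := by
      apply first_eq_zero (g' - gy).2
      -- first coordinate of (n • (g' - gy)) is ((y) - k) * 0 = 0, so...
      have hc := congrArg (fun x : ZGroupNotSplit.G => (ofLex (x : ℚ ×ₗ ℚ)).1) hdiff
      simp only [coe_zsmul, coe_nsmul, eG, ofLex_toLex] at hc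
      rw [zsmul_eQ] at hc
      have hc1 : (0 : ℚ) = (n : ℚ) * (ofLex ((g' - gy : ZGroupNotSplit.G) : ℚ ×ₗ ℚ)).1 := by
        simpa [Prod.smul_fst, nsmul_eq_mul] using hc
      have hnQ : (n : ℚ) ≠ 0 := by positivity
      exact (mul_eq_zero.mp hc1.symm).resolve_left hnQ
    -- compare second coordinates
    have hsnd := congrArg (fun x : ZGroupNotSplit.G => (ofLex (x : ℚ ×ₗ ℚ)).2) hdiff
    simp only [coe_zsmul, coe_nsmul, eG, ofLex_toLex] at hsnd
    rw [zsmul_eQ, hjd, zsmul_eQ] at hsnd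
    have hsnd' : ((y : ℤ) - k : ℚ) = (n : ℚ) * (jd : ℚ) := by
      simpa [nsmul_eq_mul] using hsnd
    have hz : (y : ℤ) - k = (n : ℤ) * jd := by exact_mod_cast hsnd'
    have hdvd : (n : ℤ) ∣ ((y : ℤ) - k) := ⟨jd, hz⟩
    have habs : |(y : ℤ) - k| < (n : ℤ) := by
      rw [abs_lt]; omega
    have := Int.eq_zero_of_abs_lt_dvd hdvd habs
    omega
  · -- not split
    rintro ⟨B, hinf, hsup⟩
    classical
    have hmem : ∀ N : ℕ, ∃ (z : ℤ) (b : ZGroupNotSplit.G), b ∈ B ∧ gG N = z • eG + b := by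
      intro N
      have : gG N ∈ (AddSubgroup.zmultiples eG) ⊔ B := hsup ▸ AddSubgroup.mem_top _
      rw [AddSubgroup.mem_sup] at this
      obtain ⟨y, hy, b, hb, hyb⟩ := this
      rw [AddSubgroup.mem_zmultiples_iff] at hy
      obtain ⟨z, hz⟩ := hy
      exact ⟨z, b, hb, by rw [← hyb, hz]⟩
    choose z b hbB hzb using hmem
    have hrec : ∀ N : ℕ, ((N : ℤ) + 1) * z (N + 1) = z N + 1 := by
      intro N
      have hstep := step_G N
      have h1 : (((N : ℤ) + 1) * z (N + 1)) • eG + ((N : ℤ) + 1) • b (N + 1)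
          = (z N + 1) • eG + b N := by
        rw [mul_smul, ← smul_add, ← hzb (N + 1), hstep, hzb N, add_smul, one_smul]
        abel
      have hw : (((N : ℤ) + 1) * z (N + 1) - (z N + 1)) • eG
          = b N - ((N : ℤ) + 1) • b (N + 1) := by
        rw [sub_smul]
        rw [show (((N : ℤ) + 1) * z (N + 1)) • eG
            = (z N + 1) • eG + b N - ((N : ℤ) + 1) • b (N + 1) by rw [← h1]; abel]
        abel
      have hBmem : (((N : ℤ) + 1) * z (N + 1) - (z N + 1)) • eG ∈ B := by
        rw [hw]
        exact sub_mem (hbB N) (zsmul_mem (hbB (N + 1)) _)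
      have hEmem : (((N : ℤ) + 1) * z (N + 1) - (z N + 1)) • eG
          ∈ AddSubgroup.zmultiples eG := AddSubgroup.zsmul_mem_zmultiples _ _
      have hbot : (((N : ℤ) + 1) * z (N + 1) - (z N + 1)) • eG = 0 := by
        have : (((N : ℤ) + 1) * z (N + 1) - (z N + 1)) • eG
            ∈ (AddSubgroup.zmultiples eG) ⊓ B := ⟨hEmem, hBmem⟩
        rw [hinf] at this
        exact AddSubgroup.mem_bot.mp this
      have := zsmul_eG_eq_zero hbot
      omega
    exact no_seq z hrec

end ZGroupNotSplit

/-- STATEMENT 15: There exists a linearly ordered abelian group `G` with a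
smallest positive element `e` which is a Z-group (for every `n ≥ 1` and `g ∈ G`
there is exactly one `k ∈ {0, …, n-1}` with `g - k • e ∈ nG`), and such that the
cyclic subgroup generated by `e` is not a direct summand of `G`: there is no
subgroup `B` with `⟨e⟩ ⊓ B = ⊥` and `⟨e⟩ ⊔ B = ⊤`. -/
theorem zgroup_not_split :
    ∃ (G : Type) (inst : AddCommGroup G) (instOrd : LinearOrder G)
      (_ : IsOrderedAddMonoid G) (e : G),
      letI := inst
      (0 < e ∧ (∀ g : G, 0 < g → e ≤ g)) ∧
      (∀ n : ℕ, 1 ≤ n → ∀ g : G,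
        ∃! k : ℕ, k < n ∧ ∃ g' : G, g - (k : ℕ) • e = (n : ℕ) • g') ∧
      ¬ ∃ B : AddSubgroup G,
          (AddSubgroup.zmultiples e) ⊓ B = ⊥ ∧ (AddSubgroup.zmultiples e) ⊔ B = ⊤ := by
  exact ZGroupNotSplit.main
end
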